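/- Let U be a finite nonempty set, d a metric on U, α > 0, and halt, gen ∈ (0,1). For a true sequence X : Fin n → U and an output sequence S : Fin m → U, define the Sequence-CLDP probability P(X, S) = halt·(1−halt)^m·∏_{i<m} Pr[Φ_EM(X[i]) = S[i]] if m < n; P(X, S) = (1−gen)·(1−halt)^n·∏_{i<n} Pr[Φ_EM(X[i]) = S[i]] if m = n; and P(X, S) = (1−gen)·(1−halt)^n·(gen/|U|)^{m−n}·∏_{i<n} Pr[Φ_EM(X[i]) = S[i]] if m > n. Then Sequence-CLDP satisfies α-content-indistinguishability: for any two true sequences X, Y : Fin n → U of the same length n and any output sequence S : Fin m → U, P(X, S) ≤ exp(α · d_seq(X, Y)) · P(Y, S), where d_seq(X, Y) = Σ_{i < n} d(X[i], Y[i]). -/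

import Mathlib

/-- The probability that the Exponential Mechanism with distance `d` and
privacy parameter `α` outputs `y` on input `v`. -/
noncomputable def EMprob {U : Type*} [Fintype U] (d : U → U → ℝ) (α : ℝ) (v y : U) : ℝ :=
  Real.exp (-α * d v y / 2) / ∑ z, Real.exp (-α * d v z / 2)

/-- The probability that Sequence-CLDP with parameters `halt`, `gen` produces
output sequence `S` (of length `m`) from true sequence `X` (of length `n`):
if `m < n` the mechanism halted after perturbing the first `m` items;
if `m ≥ n` the mechanism perturbed all `n` items and then generated
`m − n` uniformly random items (note `(gen/|U|)^0 = 1` when `m = n`). -/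
noncomputable def seqCldpProb {U : Type*} [Fintype U] (d : U → U → ℝ)
    (α halt gen : ℝ) {n m : ℕ} (X : Fin n → U) (S : Fin m → U) : ℝ :=
  if h : m < n then
    halt * (1 - halt) ^ m * ∏ i : Fin m, EMprob d α (X (Fin.castLE h.le i)) (S i)
  else
    (1 - gen) * (1 - halt) ^ n * (gen / (Fintype.card U : ℝ)) ^ (m - n) *
      ∏ i : Fin n, EMprob d α (X i) (S (Fin.castLE (not_lt.mp h) i))

lemma EMprob_pos {U : Type*} [Fintype U] [Nonempty U] (d : U → U → ℝ) (α : ℝ) (v y : U) :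
    0 < EMprob d α v y := by
  unfold EMprob
  exact div_pos (Real.exp_pos _) (Finset.sum_pos (fun z _ => Real.exp_pos _) Finset.univ_nonempty)

lemma EM_ratio {U : Type*} [Fintype U] [Nonempty U] (d : U → U → ℝ) (α : ℝ) (hα : 0 < α)
    (hd_symm : ∀ x y, d x y = d y x) (hd_tri : ∀ x y z, d x z ≤ d x y + d y z)
    (x y s : U) :
    EMprob d α x s ≤ Real.exp (α * d x y) * EMprob d α y s := by
  unfold EMprob
  have hZx : 0 < ∑ z, Real.exp (-α * d x z / 2) :=
    Finset.sum_pos (fun z _ => Real.exp_pos _) Finset.univ_nonempty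
  have hZy : 0 < ∑ z, Real.exp (-α * d y z / 2) :=
    Finset.sum_pos (fun z _ => Real.exp_pos _) Finset.univ_nonempty
  rw [div_le_iff₀ hZx, mul_comm (Real.exp (α * d x y)), mul_assoc, div_mul_eq_mul_div,
    le_div_iff₀ hZy]
  have h1 : Real.exp (-α * d x s / 2) ≤ Real.exp (α * d x y / 2) * Real.exp (-α * d y s / 2) := by
    rw [← Real.exp_add]
    apply Real.exp_le_exp.mpr
    have := hd_tri y x s
    rw [hd_symm y x] at this
    nlinarith
  have h2 : ∑ z, Real.exp (-α * d y z / 2) ≤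
      Real.exp (α * d x y / 2) * ∑ z, Real.exp (-α * d x z / 2) := by
    rw [Finset.mul_sum]
    apply Finset.sum_le_sum
    intro z _
    rw [← Real.exp_add]
    apply Real.exp_le_exp.mpr
    have := hd_tri x y z
    nlinarith
  calc Real.exp (-α * d x s / 2) * ∑ z, Real.exp (-α * d y z / 2)
      ≤ (Real.exp (α * d x y / 2) * Real.exp (-α * d y s / 2)) *
          (Real.exp (α * d x y / 2) * ∑ z, Real.exp (-α * d x z / 2)) := by
        apply mul_le_mul h1 h2 hZy.le
        positivity
    _ = Real.exp (-α * d y s / 2) * (Real.exp (α * d x y) * ∑ z, Real.exp (-α * d x z / 2)) := by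
        rw [mul_mul_mul_comm, ← Real.exp_add, add_halves]
        ring

/-- Sequence-CLDP satisfies α-content-indistinguishability. -/
theorem seq_cldp_content_indistinguishability {U : Type*} [Fintype U] [Nonempty U]
    (d : U → U → ℝ) (α : ℝ) (hα : 0 < α)
    (hd_nonneg : ∀ x y, 0 ≤ d x y)
    (hd_symm : ∀ x y, d x y = d y x)
    (hd_tri : ∀ x y z, d x z ≤ d x y + d y z)
    (hd_eq : ∀ x y, d x y = 0 ↔ x = y)
    (halt gen : ℝ)
    (hhalt : halt ∈ Set.Ioo (0 : ℝ) 1) (hgen : gen ∈ Set.Ioo (0 : ℝ) 1)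
    (n m : ℕ) (X Y : Fin n → U) (S : Fin m → U) :
    seqCldpProb d α halt gen X S
      ≤ Real.exp (α * ∑ i : Fin n, d (X i) (Y i)) * seqCldpProb d α halt gen Y S := by
  unfold seqCldpProb
  split_ifs with h
  · -- m < n case
    set C := halt * (1 - halt) ^ m with hC
    have hC0 : 0 ≤ C := by
      apply mul_nonneg hhalt.1.le
      apply pow_nonneg; linarith [hhalt.2]
    have key : ∏ i : Fin m, EMprob d α (X (Fin.castLE h.le i)) (S i) ≤
        Real.exp (α * ∑ i : Fin n, d (X i) (Y i)) *
          ∏ i : Fin m, EMprob d α (Y (Fin.castLE h.le i)) (S i) := by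
      calc ∏ i : Fin m, EMprob d α (X (Fin.castLE h.le i)) (S i)
          ≤ ∏ i : Fin m, Real.exp (α * d (X (Fin.castLE h.le i)) (Y (Fin.castLE h.le i))) *
              EMprob d α (Y (Fin.castLE h.le i)) (S i) := by
            apply Finset.prod_le_prod
            · intro i _; exact (EMprob_pos d α _ _).le
            · intro i _; exact EM_ratio d α hα hd_symm hd_tri _ _ _
        _ = Real.exp (∑ i : Fin m, α * d (X (Fin.castLE h.le i)) (Y (Fin.castLE h.le i))) *
              ∏ i : Fin m, EMprob d α (Y (Fin.castLE h.le i)) (S i) := by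
            rw [Finset.prod_mul_distrib, Real.exp_sum]
        _ ≤ Real.exp (α * ∑ i : Fin n, d (X i) (Y i)) *
              ∏ i : Fin m, EMprob d α (Y (Fin.castLE h.le i)) (S i) := by
            apply mul_le_mul_of_nonneg_right _
              (Finset.prod_nonneg fun i _ => (EMprob_pos d α _ _).le)
            apply Real.exp_le_exp.mpr
            rw [← Finset.mul_sum]
            apply mul_le_mul_of_nonneg_left _ hα.le
            have : ∑ i : Fin m, d (X (Fin.castLE h.le i)) (Y (Fin.castLE h.le i)) =
                ∑ i ∈ Finset.univ.map (Fin.castLEEmb h.le), d (X i) (Y i) := by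
              rw [Finset.sum_map]; rfl
            rw [this]
            apply Finset.sum_le_sum_of_subset_of_nonneg (Finset.subset_univ _)
            intro i _ _; exact hd_nonneg _ _
    calc C * ∏ i : Fin m, EMprob d α (X (Fin.castLE h.le i)) (S i)
        ≤ C * (Real.exp (α * ∑ i : Fin n, d (X i) (Y i)) *
            ∏ i : Fin m, EMprob d α (Y (Fin.castLE h.le i)) (S i)) :=
          mul_le_mul_of_nonneg_left key hC0
      _ = Real.exp (α * ∑ i : Fin n, d (X i) (Y i)) *
            (C * ∏ i : Fin m, EMprob d α (Y (Fin.castLE h.le i)) (S i)) := by ring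
  · -- m ≥ n case
    set C := (1 - gen) * (1 - halt) ^ n * (gen / (Fintype.card U : ℝ)) ^ (m - n) with hC
    have hC0 : 0 ≤ C := by
      apply mul_nonneg
      apply mul_nonneg
      · linarith [hgen.2]
      · apply pow_nonneg; linarith [hhalt.2]
      · exact pow_nonneg (div_nonneg hgen.1.le (Nat.cast_nonneg _)) _
    have key : ∏ i : Fin n, EMprob d α (X i) (S (Fin.castLE (le_of_not_gt h) i)) ≤
        Real.exp (α * ∑ i : Fin n, d (X i) (Y i)) *
          ∏ i : Fin n, EMprob d α (Y i) (S (Fin.castLE (le_of_not_gt h) i)) := by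
      calc ∏ i : Fin n, EMprob d α (X i) (S (Fin.castLE (le_of_not_gt h) i))
          ≤ ∏ i : Fin n, Real.exp (α * d (X i) (Y i)) *
              EMprob d α (Y i) (S (Fin.castLE (le_of_not_gt h) i)) := by
            apply Finset.prod_le_prod
            · intro i _; exact (EMprob_pos d α _ _).le
            · intro i _; exact EM_ratio d α hα hd_symm hd_tri _ _ _
        _ = Real.exp (∑ i : Fin n, α * d (X i) (Y i)) *
              ∏ i : Fin n, EMprob d α (Y i) (S (Fin.castLE (le_of_not_gt h) i)) := by
            rw [Finset.prod_mul_distrib, Real.exp_sum]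
        _ = Real.exp (α * ∑ i : Fin n, d (X i) (Y i)) *
              ∏ i : Fin n, EMprob d α (Y i) (S (Fin.castLE (le_of_not_gt h) i)) := by
            rw [Finset.mul_sum]
    calc C * ∏ i : Fin n, EMprob d α (X i) (S (Fin.castLE (le_of_not_gt h) i))
        ≤ C * (Real.exp (α * ∑ i : Fin n, d (X i) (Y i)) *
            ∏ i : Fin n, EMprob d α (Y i) (S (Fin.castLE (le_of_not_gt h) i))) :=
          mul_le_mul_of_nonneg_left key hC0
      _ = Real.exp (α * ∑ i : Fin n, d (X i) (Y i)) *
            (C * ∏ i : Fin n, EMprob d α (Y i) (S (Fin.castLE (le_of_not_gt h) i))) := by ring
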